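/- Let A : ℝ → GL(N,ℝ) be a faithful closed continuous homomorphism with no eigenvalue of A(t), t ≠ 0, of modulus 1. If there exist σ ∈ GL(N,ℝ) and h > 0 such that σ A(h) σ⁻¹ ∈ SL(N,ℤ), then the subgroup σ⁻¹ℤ^N ⋊_A hℤ = {(σ⁻¹p, hn) : p ∈ ℤ^N, n ∈ ℤ} is a discrete cocompact subgroup (lattice) of ℝ^N ⋊_A ℝ. -/

import Mathlib

open Matrix NormedSpace

/-- Multiplication of the semidirect product `G = ℝ^N ⋊_A ℝ`, `A(t) = exp(tM)`. -/
noncomputable def gmul {N : ℕ} (M : Matrix (Fin N) (Fin N) ℝ)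
    (g h : (Fin N → ℝ) × ℝ) : (Fin N → ℝ) × ℝ :=
  (g.1 + (exp (g.2 • M)).mulVec h.1, g.2 + h.2)

/-- Inverse in the semidirect product `G = ℝ^N ⋊_A ℝ`. -/
noncomputable def ginv {N : ℕ} (M : Matrix (Fin N) (Fin N) ℝ)
    (g : (Fin N → ℝ) × ℝ) : (Fin N → ℝ) × ℝ :=
  (-(exp ((-g.2) • M)).mulVec g.1, -g.2)

lemma lc_exp_add {N : ℕ} (M : Matrix (Fin N) (Fin N) ℝ) (s t : ℝ) :
    exp ((s + t) • M) = exp (s • M) * exp (t • M) := by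
  rw [add_smul]
  exact Matrix.exp_add_of_commute _ _ (((Commute.refl M).smul_left s).smul_right t)

lemma lc_cast_mulVec {N : ℕ} (C : Matrix (Fin N) (Fin N) ℤ) (q : Fin N → ℤ) :
    (C.map (fun k => (k : ℝ))) *ᵥ (fun i => ((q i : ℝ))) = fun i => ((C *ᵥ q) i : ℝ) := by
  funext i
  exact ((Int.castRingHom ℝ).map_mulVec C q i).symm

lemma lc_map_mul {N : ℕ} (C D : Matrix (Fin N) (Fin N) ℤ) :
    (C * D).map (fun k => (k : ℝ)) = C.map (fun k => (k : ℝ)) * D.map (fun k => (k : ℝ)) :=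
  Matrix.map_mul (f := Int.castRingHom ℝ)

lemma lc_map_one {N : ℕ} :
    (1 : Matrix (Fin N) (Fin N) ℤ).map (fun k => (k : ℝ)) = 1 :=
  Matrix.map_one _ (by simp) (by simp)

lemma lc_conj {N : ℕ} (M : Matrix (Fin N) (Fin N) ℝ) (σ : Matrix (Fin N) (Fin N) ℝ)
    (hσ : IsUnit σ.det) (s t : ℝ) :
    (σ * exp (s • M) * σ⁻¹) * (σ * exp (t • M) * σ⁻¹)
      = σ * exp ((s + t) • M) * σ⁻¹ := by
  have hinvmul : σ⁻¹ * σ = 1 := Matrix.nonsing_inv_mul σ hσ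
  rw [lc_exp_add]
  calc σ * exp (s • M) * σ⁻¹ * (σ * exp (t • M) * σ⁻¹)
      = σ * exp (s • M) * (σ⁻¹ * σ) * exp (t • M) * σ⁻¹ := by
        simp only [Matrix.mul_assoc]
    _ = σ * (exp (s • M) * exp (t • M)) * σ⁻¹ := by
        rw [hinvmul]; simp only [Matrix.mul_one, Matrix.mul_assoc]

lemma lc_key {N : ℕ} (M : Matrix (Fin N) (Fin N) ℝ) (σ : Matrix (Fin N) (Fin N) ℝ)
    (hσ : IsUnit σ.det) (h : ℝ) (Bz : Matrix (Fin N) (Fin N) ℤ) (hdet : Bz.det = 1)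
    (hBz : Bz.map (fun k => (k : ℝ)) = σ * exp (h • M) * σ⁻¹) (n : ℤ) :
    ∃ C : Matrix (Fin N) (Fin N) ℤ,
      C.map (fun k => (k : ℝ)) = σ * exp ((h * n) • M) * σ⁻¹ := by
  have hmulinv : σ * σ⁻¹ = 1 := Matrix.mul_nonsing_inv σ hσ
  have hconj := lc_conj M σ hσ
  have hBadj : (Bz.adjugate).map (fun k => (k : ℝ)) = σ * exp ((-h) • M) * σ⁻¹ := by
    have h1 : Bz.map (fun k => (k : ℝ)) * (Bz.adjugate).map (fun k => (k : ℝ)) = 1 := by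
      rw [← lc_map_mul, Matrix.mul_adjugate, hdet, one_smul, lc_map_one]
    have h2 : (σ * exp (h • M) * σ⁻¹) * (σ * exp ((-h) • M) * σ⁻¹) = 1 := by
      rw [hconj, add_neg_cancel, zero_smul, NormedSpace.exp_zero, Matrix.mul_one, hmulinv]
    rw [← hBz] at h2
    have h3 : (σ * exp ((-h) • M) * σ⁻¹) * Bz.map (fun k => (k : ℝ)) = 1 :=
      mul_eq_one_comm.mp h2
    calc (Bz.adjugate).map (fun k => (k : ℝ))
        = ((σ * exp ((-h) • M) * σ⁻¹) * Bz.map (fun k => (k : ℝ)))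
            * (Bz.adjugate).map (fun k => (k : ℝ)) := by rw [h3, Matrix.one_mul]
      _ = (σ * exp ((-h) • M) * σ⁻¹)
            * (Bz.map (fun k => (k : ℝ)) * (Bz.adjugate).map (fun k => (k : ℝ))) := by
          rw [Matrix.mul_assoc]
      _ = σ * exp ((-h) • M) * σ⁻¹ := by rw [h1, Matrix.mul_one]
  induction n using Int.induction_on with
  | zero =>
    refine ⟨1, ?_⟩
    rw [lc_map_one]
    rw [show (h * ((0:ℤ):ℝ)) = 0 by push_cast; ring]
    rw [zero_smul, NormedSpace.exp_zero, Matrix.mul_one, hmulinv]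
  | succ n ih =>
    obtain ⟨C, hC⟩ := ih
    refine ⟨C * Bz, ?_⟩
    rw [lc_map_mul, hC, hBz, hconj]
    congr 2
    push_cast; ring
  | pred n ih =>
    obtain ⟨C, hC⟩ := ih
    refine ⟨C * Bz.adjugate, ?_⟩
    rw [lc_map_mul, hC, hBadj, hconj]
    congr 2
    push_cast; ring

set_option maxHeartbeats 1000000 in
/-- If `A(t) = exp(tM)` is a faithful closed one-parameter group with no eigenvalue of
`A(t)`, `t ≠ 0`, of modulus `1`, and `σ A(h) σ⁻¹ ∈ SL(N,ℤ)` for some `σ ∈ GL(N,ℝ)` and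
`h > 0`, then `σ⁻¹ℤ^N ⋊_A hℤ` is a discrete cocompact subgroup (a lattice) of
`ℝ^N ⋊_A ℝ`. -/
theorem lattice_criterion {N : ℕ} (M : Matrix (Fin N) (Fin N) ℝ)
    (hfaithful : Function.Injective (fun t : ℝ => exp (t • M)))
    (hclosed : IsClosed (Set.range (fun t : ℝ => exp (t • M))))
    (heig : ∀ t : ℝ, t ≠ 0 →
      ∀ μ ∈ spectrum ℂ ((exp (t • M)).map (Complex.ofReal ·)), ‖μ‖ ≠ 1)
    (σ : Matrix (Fin N) (Fin N) ℝ) (hσ : IsUnit σ.det)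
    (h : ℝ) (hh : 0 < h)
    (hB : ∃ Bz : Matrix (Fin N) (Fin N) ℤ, Bz.det = 1 ∧
      Bz.map (fun k => (k : ℝ)) = σ * exp (h • M) * σ⁻¹) :
    -- the set `σ⁻¹ℤ^N ⋊_A hℤ`
    let L : Set ((Fin N → ℝ) × ℝ) :=
      {g | ∃ (p : Fin N → ℤ) (n : ℤ), g = (σ⁻¹.mulVec (fun i => (p i : ℝ)), h * n)}
    -- it is a subgroup:
    (((0 : Fin N → ℝ), (0 : ℝ)) ∈ L ∧
      (∀ g₁ ∈ L, ∀ g₂ ∈ L, gmul M g₁ g₂ ∈ L) ∧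
      (∀ g ∈ L, ginv M g ∈ L)) ∧
    -- it is discrete:
    (∀ x ∈ L, ∃ U : Set ((Fin N → ℝ) × ℝ), IsOpen U ∧ x ∈ U ∧ U ∩ L = {x}) ∧
    -- it is cocompact:
    (∃ K : Set ((Fin N → ℝ) × ℝ), IsCompact K ∧
      ∀ g : (Fin N → ℝ) × ℝ, ∃ l ∈ L, ∃ k ∈ K, g = gmul M l k) := by
  intro L
  obtain ⟨Bz, hdet, hBz⟩ := hB
  have hmulinv : σ * σ⁻¹ = 1 := Matrix.mul_nonsing_inv σ hσ
  have hinvmul : σ⁻¹ * σ = 1 := Matrix.nonsing_inv_mul σ hσ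
  choose C hC using lc_key M σ hσ h Bz hdet hBz
  have hcomm : ∀ n : ℤ, exp ((h * (n:ℝ)) • M) * σ⁻¹ = σ⁻¹ * (C n).map (fun k => (k : ℝ)) := by
    intro n
    rw [hC n, ← Matrix.mul_assoc, ← Matrix.mul_assoc, hinvmul, Matrix.one_mul]
  have hvec : ∀ (n : ℤ) (v : Fin N → ℝ),
      exp ((h * (n:ℝ)) • M) *ᵥ (σ⁻¹ *ᵥ v) = σ⁻¹ *ᵥ ((C n).map (fun k => (k : ℝ)) *ᵥ v) := by
    intro n v
    rw [Matrix.mulVec_mulVec, Matrix.mulVec_mulVec, hcomm]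
  have hvecZ : ∀ (n : ℤ) (p : Fin N → ℤ),
      exp ((h * (n:ℝ)) • M) *ᵥ (σ⁻¹ *ᵥ fun i => ((p i : ℝ)))
        = σ⁻¹ *ᵥ (fun i => ((C n *ᵥ p) i : ℝ)) := by
    intro n p; rw [hvec, lc_cast_mulVec]
  have hee : ∀ m k : ℤ, exp ((h * (m:ℝ)) • M) * exp ((h * (k:ℝ)) • M)
      = exp ((h * ((m + k : ℤ) : ℝ)) • M) := by
    intro m k
    rw [show (h * ((m + k : ℤ) : ℝ)) = h * (m:ℝ) + h * (k:ℝ) by push_cast; ring, lc_exp_add]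
  have hmem : ∀ y : (Fin N → ℝ) × ℝ, y ∈ L ↔ ∃ (p : Fin N → ℤ) (n : ℤ),
      y = (σ⁻¹ *ᵥ (fun i => (p i : ℝ)), h * n) := fun y => Iff.rfl
  refine ⟨⟨?_, ?_, ?_⟩, ?_, ?_⟩
  · -- identity
    refine (hmem _).mpr ⟨0, 0, ?_⟩
    refine Prod.ext ?_ (by norm_num)
    show (0 : Fin N → ℝ) = σ⁻¹ *ᵥ (fun i => (((0 : Fin N → ℤ) i : ℝ)))
    rw [show (fun i : Fin N => (((0 : Fin N → ℤ) i : ℝ))) = (0 : Fin N → ℝ) by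
      funext i; simp]
    rw [Matrix.mulVec_zero]
  · -- multiplication
    rintro g₁ ⟨p₁, n₁, rfl⟩ g₂ ⟨p₂, n₂, rfl⟩
    refine (hmem _).mpr ⟨p₁ + C n₁ *ᵥ p₂, n₁ + n₂, ?_⟩
    refine Prod.ext ?_ (by show h * (n₁:ℝ) + h * (n₂:ℝ) = _; push_cast; ring)
    show σ⁻¹ *ᵥ _ + exp ((h * (n₁:ℝ)) • M) *ᵥ (σ⁻¹ *ᵥ _) = σ⁻¹ *ᵥ _
    rw [hvecZ, ← Matrix.mulVec_add]
    rw [show ((fun i => ((p₁ i : ℝ))) + fun i => ((C n₁ *ᵥ p₂) i : ℝ))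
        = fun i => (((p₁ + C n₁ *ᵥ p₂) i : ℝ)) by
      funext i; push_cast [Pi.add_apply]; ring]
  · -- inverse
    rintro g ⟨p, n, rfl⟩
    refine (hmem _).mpr ⟨-(C (-n) *ᵥ p), -n, ?_⟩
    refine Prod.ext ?_ (by show -(h * (n:ℝ)) = _; push_cast; ring)
    show -(exp ((-(h * (n:ℝ))) • M) *ᵥ (σ⁻¹ *ᵥ _)) = σ⁻¹ *ᵥ _
    rw [show (-(h * (n:ℝ))) = h * ((-n : ℤ) : ℝ) by push_cast; ring]
    rw [hvecZ, ← Matrix.mulVec_neg]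
    rw [show (-(fun i => ((C (-n) *ᵥ p) i : ℝ)))
        = fun i => (((-(C (-n) *ᵥ p)) i : ℝ)) by
      funext i; push_cast [Pi.neg_apply]; ring]
  · -- discreteness
    rintro x ⟨p, n, rfl⟩
    refine ⟨(⋂ i : Fin N, {y : (Fin N → ℝ) × ℝ | |(σ *ᵥ y.1) i - (p i : ℝ)| < 1/2}) ∩
      {y : (Fin N → ℝ) × ℝ | |y.2 - h * n| < h/2}, ?_, ?_, ?_⟩
    · refine IsOpen.inter (isOpen_iInter_of_finite fun i => ?_) ?_
      · exact isOpen_lt (Continuous.abs (Continuous.sub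
          ((continuous_apply i).comp (Continuous.matrix_mulVec continuous_const continuous_fst))
          continuous_const)) continuous_const
      · exact isOpen_lt ((continuous_snd.sub continuous_const).abs) continuous_const
    · constructor
      · refine Set.mem_iInter.mpr fun i => ?_
        show |(σ *ᵥ (σ⁻¹ *ᵥ fun i => ((p i : ℝ)))) i - (p i : ℝ)| < 1/2
        rw [Matrix.mulVec_mulVec, hmulinv, Matrix.one_mulVec]
        norm_num
      · show |h * (n:ℝ) - h * (n:ℝ)| < h/2
        rw [sub_self, abs_zero]
        linarith
    · ext y
      simp only [Set.mem_inter_iff, Set.mem_singleton_iff]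
      constructor
      · rintro ⟨⟨hy1, hy2⟩, p', n', rfl⟩
        have hsig : (σ *ᵥ (σ⁻¹ *ᵥ fun i => ((p' i : ℝ)))) = fun i => ((p' i : ℝ)) := by
          rw [Matrix.mulVec_mulVec, hmulinv, Matrix.one_mulVec]
        have hp : p' = p := by
          funext i
          have hi := Set.mem_iInter.mp hy1 i
          simp only [Set.mem_setOf_eq, hsig] at hi
          have h1 : |((p' i - p i : ℤ) : ℝ)| < 1 := by
            push_cast
            calc |(p' i : ℝ) - p i| < 1/2 := hi
              _ < 1 := by norm_num
          have h2 : -1 < ((p' i - p i : ℤ) : ℝ) ∧ ((p' i - p i : ℤ) : ℝ) < 1 := abs_lt.mp h1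
          have h3 : -1 < p' i - p i ∧ p' i - p i < 1 := by exact_mod_cast h2
          omega
        have hn : n' = n := by
          have hi : |h * (n':ℝ) - h * (n:ℝ)| < h/2 := hy2
          have h1 : h * |(n':ℝ) - n| < h * (1/2) := by
            rw [← abs_of_pos hh, ← abs_mul, mul_sub]
            calc |h * (n':ℝ) - h * n| < h/2 := hi
              _ = |h| * (1/2) := by rw [abs_of_pos hh]; ring
            
          have h2 : |(n':ℝ) - n| < 1/2 := lt_of_mul_lt_mul_left h1 hh.le
          have h3 : |((n' - n : ℤ) : ℝ)| < 1 := by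
            push_cast
            calc |(n':ℝ) - n| < 1/2 := h2
              _ < 1 := by norm_num
          have h4 : -1 < ((n' - n : ℤ) : ℝ) ∧ ((n' - n : ℤ) : ℝ) < 1 := abs_lt.mp h3
          have h5 : -1 < n' - n ∧ n' - n < 1 := by exact_mod_cast h4
          omega
        rw [hp, hn]
      · rintro rfl
        refine ⟨⟨Set.mem_iInter.mpr fun i => ?_, ?_⟩, p, n, rfl⟩
        · show |(σ *ᵥ (σ⁻¹ *ᵥ fun i => ((p i : ℝ)))) i - (p i : ℝ)| < 1/2
          rw [Matrix.mulVec_mulVec, hmulinv, Matrix.one_mulVec]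
          norm_num
        · show |h * (n:ℝ) - h * (n:ℝ)| < h/2
          rw [sub_self, abs_zero]
          linarith
  · -- cocompactness
    refine ⟨((fun w => σ⁻¹ *ᵥ w) '' Set.Icc (0 : Fin N → ℝ) 1) ×ˢ Set.Icc (0:ℝ) h, ?_, ?_⟩
    · exact (isCompact_Icc.image (continuous_const.matrix_mulVec continuous_id)).prod
        isCompact_Icc
    · rintro ⟨b, t⟩
      set n : ℤ := ⌊t / h⌋ with hn
      set w : Fin N → ℝ := σ *ᵥ (exp ((h * ((-n : ℤ) : ℝ)) • M) *ᵥ b) with hw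
      set q : Fin N → ℤ := fun i => ⌊w i⌋ with hq
      have hts : h * (n:ℝ) ≤ t ∧ t ≤ h * (n:ℝ) + h := by
        have h1 : ((n:ℝ)) ≤ t / h := Int.floor_le (t / h)
        have h2 : t / h < (n:ℝ) + 1 := Int.lt_floor_add_one (t / h)
        have h3 : h * (t / h) = t := by field_simp
        constructor
        · nlinarith
        · nlinarith
      refine ⟨(σ⁻¹ *ᵥ (fun i => ((C n *ᵥ q) i : ℝ)), h * n), (hmem _).mpr ⟨C n *ᵥ q, n, rfl⟩,
        (σ⁻¹ *ᵥ (w - fun i => ((q i : ℝ))), t - h * n), ⟨⟨w - fun i => ((q i : ℝ)), ?_, rfl⟩, ?_⟩, ?_⟩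
      · rw [Set.mem_Icc]
        constructor
        · intro i
          simp only [Pi.sub_apply, Pi.zero_apply, sub_nonneg]
          exact Int.floor_le (w i)
        · intro i
          simp only [Pi.sub_apply, Pi.one_apply]
          have := Int.lt_floor_add_one (w i)
          linarith
      · exact Set.mem_Icc.mpr ⟨by linarith [hts.1], by linarith [hts.2]⟩
      · refine Prod.ext ?_ (by show t = h * (n:ℝ) + (t - h * (n:ℝ)); ring)
        show b = σ⁻¹ *ᵥ _ + exp ((h * (n:ℝ)) • M) *ᵥ (σ⁻¹ *ᵥ _)
        have hmat : σ⁻¹ * ((C n).map (fun k => (k : ℝ))) * σ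
            * exp ((h * ((-n : ℤ) : ℝ)) • M) = 1 := by
          rw [← hcomm n]
          rw [Matrix.mul_assoc (exp ((h * (n:ℝ)) • M)) σ⁻¹ σ, hinvmul, Matrix.mul_one]
          rw [hee n (-n)]
          rw [show ((n + -n : ℤ)) = 0 by ring]
          rw [show (h * ((0:ℤ):ℝ)) = 0 by push_cast; ring]
          rw [zero_smul, NormedSpace.exp_zero]
        calc b = (σ⁻¹ * ((C n).map (fun k => (k : ℝ))) * σ
              * exp ((h * ((-n : ℤ) : ℝ)) • M)) *ᵥ b := by rw [hmat, Matrix.one_mulVec]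
          _ = σ⁻¹ *ᵥ ((C n).map (fun k => (k : ℝ)) *ᵥ w) := by
              rw [hw, Matrix.mulVec_mulVec, Matrix.mulVec_mulVec, Matrix.mulVec_mulVec]
          _ = σ⁻¹ *ᵥ ((fun i => ((C n *ᵥ q) i : ℝ))
                + ((C n).map (fun k => (k : ℝ)) *ᵥ w - fun i => ((C n *ᵥ q) i : ℝ))) := by
              rw [add_sub_cancel]
          _ = σ⁻¹ *ᵥ (fun i => ((C n *ᵥ q) i : ℝ))
                + exp ((h * (n:ℝ)) • M) *ᵥ (σ⁻¹ *ᵥ (w - fun i => ((q i : ℝ)))) := by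
              rw [hvec n, Matrix.mulVec_sub, lc_cast_mulVec, Matrix.mulVec_add]
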